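/- arXiv:2504.19995 — 2 statements merged into one kernel-verified Lean document; each statement's English description precedes it below -/
import Mathlib

section
/- Let Γ be a group, H ≤ Γ a subgroup, and H' ≤ H a subgroup of finite index in H. If H' is separable in Γ, then H is separable in Γ. -/
def SeparableSubgroup {G : Type*} [Group G] (H : Subgroup G) : Prop :=
  ∀ g : G, g ∉ H → ∃ (F : Type) (_ : Group F) (_ : Finite F) (φ : G →* F),
    φ g ∉ φ '' (H : Set G)

/-- If a finite-index subgroup H' of H is separable in Γ, then so is H. -/
theorem separable_of_finiteIndex_subgroup {Γ : Type*} [Group Γ] (H H' : Subgroup Γ)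
    (hle : H' ≤ H) (hfi : H'.relIndex H ≠ 0) (hsep : SeparableSubgroup H') :
    SeparableSubgroup H := by
  intro g hg
  haveI : Finite (H ⧸ H'.subgroupOf H) := by
    rw [Subgroup.relIndex] at hfi
    exact Nat.finite_of_card_ne_zero hfi
  set Q := H ⧸ H'.subgroupOf H with hQ
  obtain ⟨n, ⟨e⟩⟩ := Finite.exists_equiv_fin Q
  have key : ∀ q : Q, ((q.out : H) : Γ)⁻¹ * g ∉ H' := by
    intro q hmem
    exact hg (by simpa using H.mul_mem (q.out : H).2 (hle hmem))
  choose F grp fin φ hφ using fun i : Fin n => hsep _ (key (e.symm i))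
  letI : ∀ i, Group (F i) := grp
  letI : ∀ i, Finite (F i) := fin
  refine ⟨∀ i, F i, inferInstance, inferInstance, Pi.monoidHom φ, ?_⟩
  rintro ⟨h, hH, heq⟩
  set q : Q := QuotientGroup.mk ⟨h, hH⟩ with hq
  set i : Fin n := e q with hi
  have hout : e.symm i = q := e.symm_apply_apply q
  have hrel : (((e.symm i).out : H) : Γ)⁻¹ * h ∈ H' := by
    have h1 : (QuotientGroup.mk (e.symm i).out : Q) = QuotientGroup.mk ⟨h, hH⟩ := by
      rw [hout, hq]
      exact Quotient.out_eq _
    have := (QuotientGroup.eq).1 h1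
    simpa [Subgroup.mem_subgroupOf] using this
  apply hφ i
  refine ⟨(((e.symm i).out : H) : Γ)⁻¹ * h, hrel, ?_⟩
  have hgh : φ i g = φ i h := (congrFun heq i).symm
  simp [map_mul, hgh]
end

section
/- The cyclic subgroup ⟨a⟩ of the Baumslag–Solitar group BS(1,2) = ⟨t, a | t a t⁻¹ = a²⟩ is not separable in BS(1,2). -/
/-- The relator of BS(1,2): t a t⁻¹ a⁻². Generators: `true ↦ t`, `false ↦ a`. -/
def bsRels : Set (FreeGroup Bool) :=
  {FreeGroup.of true * FreeGroup.of false * (FreeGroup.of true)⁻¹ * ((FreeGroup.of false) ^ 2)⁻¹}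

/-- The Baumslag–Solitar group BS(1,2). -/
def BS12 : Type := PresentedGroup bsRels

instance : Group BS12 := by unfold BS12; infer_instance

def bsA : BS12 := PresentedGroup.of false

def bsT : BS12 := PresentedGroup.of true

lemma bs_rel : bsT * bsA * bsT⁻¹ = bsA ^ 2 := by
  have h : (QuotientGroup.mk (FreeGroup.of true * FreeGroup.of false *
      (FreeGroup.of true)⁻¹ * ((FreeGroup.of false) ^ 2)⁻¹) : PresentedGroup bsRels) = 1 := by
    rw [QuotientGroup.eq_one_iff]
    exact Subgroup.subset_normalClosure rfl
  have h2 : (bsT * bsA * bsT⁻¹ * (bsA ^ 2)⁻¹ : BS12) = 1 := by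
    exact h
  exact mul_inv_eq_one.mp h2

/-- the perm `x ↦ 2 * x` of ℚ -/
def permT : Equiv.Perm ℚ :=
  ⟨fun x => 2 * x, fun x => x / 2, fun x => by ring, fun x => by ring⟩

/-- translations as a homomorphism -/
def transHom : Multiplicative ℚ →* Equiv.Perm ℚ :=
  MonoidHom.mk' (fun q => Equiv.addLeft q.toAdd) (by
    intro a b
    ext x
    simp [Equiv.Perm.mul_apply, add_assoc])

def permA : Equiv.Perm ℚ := transHom (Multiplicative.ofAdd 1)

lemma bs_lift_rel : ∀ r ∈ bsRels,
    FreeGroup.lift (fun b : Bool => if b then permT else permA) r = 1 := by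
  intro r hr
  rw [Set.mem_singleton_iff.mp hr]
  simp only [map_mul, map_inv, map_pow, FreeGroup.lift_apply_of, if_true, if_false]
  ext x
  simp [permT, permA, transHom, Equiv.Perm.mul_apply, Equiv.Perm.inv_def]
  ring

def bsψ : BS12 →* Equiv.Perm ℚ := PresentedGroup.toGroup bs_lift_rel

lemma bsψ_a : bsψ bsA = permA := PresentedGroup.toGroup.of bs_lift_rel

lemma bsψ_t : bsψ bsT = permT := PresentedGroup.toGroup.of bs_lift_rel

/-- the witness g = t⁻¹ a t -/
def bsG : BS12 := bsT⁻¹ * bsA * bsT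

lemma bsG_sq : bsG ^ 2 = bsA := by
  have h : bsG ^ 2 = bsT⁻¹ * bsA ^ 2 * bsT := by
    show (bsT⁻¹ * bsA * bsT) ^ 2 = _
    rw [pow_two, pow_two]
    group
  rw [h, ← bs_rel]; group

lemma bsG_not_mem : bsG ∉ Subgroup.zpowers bsA := by
  intro hmem
  obtain ⟨n, hn⟩ := hmem
  have h := congrArg bsψ hn
  rw [map_zpow, bsψ_a] at h
  have h2 : bsψ bsG = permT⁻¹ * permA * permT := by
    unfold bsG; rw [map_mul, map_mul, map_inv, bsψ_a, bsψ_t]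
  rw [h2] at h
  have hA : permA ^ n = transHom (Multiplicative.ofAdd (n : ℚ)) := by
    rw [permA, ← map_zpow]
    congr 1
    simp [← ofAdd_zsmul]
  rw [hA] at h
  have heval := congrArg (fun p : Equiv.Perm ℚ => p 0) h.symm
  simp [permT, permA, transHom, Equiv.Perm.mul_apply, Equiv.Perm.inv_def] at heval
  -- heval should say (n : ℚ) = 1/2 (in some form)
  have h4 : (n : ℚ) = 2⁻¹ := heval.symm
  have h5 : (2 : ℚ) * n = 1 := by rw [h4]; norm_num
  have h3 : (2 * n : ℤ) = 1 := by exact_mod_cast h5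
  omega

/-- The cyclic subgroup ⟨a⟩ of BS(1,2) is not separable. -/
theorem bs_zpowers_a_not_separable :
    ¬ SeparableSubgroup (Subgroup.zpowers bsA) := by
  intro hsep
  obtain ⟨F, _, _, φ, hφ⟩ := hsep bsG bsG_not_mem
  apply hφ
  set x := φ bsA with hx
  set tt := φ bsT with htt
  have hrel : tt * x * tt⁻¹ = x ^ 2 := by
    rw [hx, htt, ← map_inv, ← map_mul, ← map_mul, bs_rel, map_pow]
  set n := orderOf x with hnn
  have hnpos : 0 < n := orderOf_pos x
  have hconj : orderOf (x ^ 2) = n := by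
    rw [← hrel]
    exact (MulAut.conj tt).orderOf_eq x
  have hodd : ¬ 2 ∣ n := by
    intro h2
    have hg : Nat.gcd n 2 = 2 := by rw [Nat.gcd_comm]; exact Nat.gcd_eq_left h2
    rw [orderOf_pow, ← hnn, hg] at hconj
    omega
  set y := φ bsG with hy
  have hy2 : y ^ 2 = x := by rw [hy, hx, ← map_pow, bsG_sq]
  have hyc : y = tt⁻¹ * x * tt := by
    rw [hy, hx, htt]; unfold bsG; rw [map_mul, map_mul, map_inv]
  have hyn : y ^ n = 1 := by
    rw [hyc]
    have hc : (tt⁻¹ * x * tt) ^ n = tt⁻¹ * x ^ n * tt := by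
      have := conj_pow (a := tt⁻¹) (b := x) (i := n)
      simpa using this
    rw [hc, pow_orderOf_eq_one]
    group
  have hk : 2 * ((n + 1) / 2) = n + 1 := by omega
  have hyx : y = x ^ ((n + 1) / 2) := by
    calc y = y ^ (n + 1) := by rw [pow_succ, hyn, one_mul]
    _ = (y ^ 2) ^ ((n + 1) / 2) := by rw [← pow_mul, hk]
    _ = x ^ ((n + 1) / 2) := by rw [hy2]
  refine ⟨bsA ^ ((n + 1) / 2), ⟨(((n + 1) / 2 : ℕ) : ℤ), by
    show bsA ^ ((((n + 1) / 2 : ℕ)) : ℤ) = bsA ^ ((n + 1) / 2)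
    exact zpow_natCast _ _⟩, ?_⟩
  rw [map_pow, ← hx, ← hyx]
end
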